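/- In ℚ[a,h,x₁,x₂], the ideal I₂ = (x₁² − hx₁ − a, x₂² − hx₂ − a) is contained in the ideal I₁ = (x₁ + x₂ − h, x₁x₂ + a), so there is an induced surjective R₀-algebra homomorphism pr : B₂ → B₁; moreover, under the isomorphisms f : B₁ ≅ 𝒜 and g : B₂ ≅ 𝒜 ⊗_{R₀} 𝒜, the map pr corresponds to the multiplication map m : 𝒜 ⊗_{R₀} 𝒜 → 𝒜, i.e. f ∘ pr = m ∘ g as R₀-linear maps B₂ → 𝒜. (This is the statement Λ₀* = m for the induced map on homology.) -/

import Mathlib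

open TensorProduct
set_option maxHeartbeats 1000000
set_option synthInstance.maxHeartbeats 200000

noncomputable section

/-- `R₀ = ℚ[a,h]`. -/
abbrev R0 : Type := MvPolynomial (Fin 2) ℚ

noncomputable def aP : R0 := MvPolynomial.X 0
noncomputable def hP : R0 := MvPolynomial.X 1

noncomputable def quadPoly : Polynomial R0 :=
  Polynomial.X ^ 2 - Polynomial.C hP * Polynomial.X - Polynomial.C aP

/-- `𝒜 = R₀[X]/(X² − h·X − a)`. -/
abbrev Afr : Type := AdjoinRoot quadPoly

noncomputable def Xa : Afr := AdjoinRoot.root quadPoly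

/-- `ℚ[a,h,x₁,x₂]`, realized as the polynomial ring in `x₁ = X 0`, `x₂ = X 1` over `R₀`. -/
abbrev S : Type := MvPolynomial (Fin 2) R0

noncomputable def y1 : S := MvPolynomial.X 0
noncomputable def y2 : S := MvPolynomial.X 1

/-- The ideal `(x₁ + x₂ − h, x₁x₂ + a)`. -/
noncomputable def I1 : Ideal S :=
  Ideal.span ({y1 + y2 - MvPolynomial.C hP, y1 * y2 + MvPolynomial.C aP} : Set S)

/-- The ideal `(x₁² − hx₁ − a, x₂² − hx₂ − a)`. -/
noncomputable def I2 : Ideal S :=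
  Ideal.span ({y1 ^ 2 - MvPolynomial.C hP * y1 - MvPolynomial.C aP,
    y2 ^ 2 - MvPolynomial.C hP * y2 - MvPolynomial.C aP} : Set S)

/-- `B₁ = ℚ[a,h,x₁,x₂]/(x₁ + x₂ − h, x₁x₂ + a)`. -/
abbrev B1 : Type := S ⧸ I1

/-- `B₂ = ℚ[a,h,x₁,x₂]/(x₁² − hx₁ − a, x₂² − hx₂ − a)`. -/
abbrev B2 : Type := S ⧸ I2

/-- `I₂ ⊆ I₁`, so the identity of `ℚ[a,h,x₁,x₂]` induces a surjective
projection `pr : B₂ → B₁` (given on classes by `pr(mk_{I₂} s) = mk_{I₁} s`); under the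
isomorphisms `f : B₁ ≅ 𝒜` and `g : B₂ ≅ 𝒜 ⊗ 𝒜`, the map `pr` corresponds to the
multiplication map `m`, i.e. `f ∘ pr = m ∘ g`.  (This is `Λ₀* = m`.) -/

lemma mul'_right (u : Afr ⊗[R0] Afr) (c : Afr) :
    LinearMap.mul' R0 Afr (u * ((1 : Afr) ⊗ₜ[R0] c)) = LinearMap.mul' R0 Afr u * c := by
  induction u using TensorProduct.induction_on with
  | zero => simp
  | tmul a b => simp [Algebra.TensorProduct.tmul_mul_tmul, LinearMap.mul'_apply, mul_assoc]
  | add x y hx hy => rw [add_mul, map_add, hx, map_add, hy, add_mul]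

lemma mul'_left (u : Afr ⊗[R0] Afr) (c : Afr) :
    LinearMap.mul' R0 Afr (u * (c ⊗ₜ[R0] (1 : Afr))) = LinearMap.mul' R0 Afr u * c := by
  induction u using TensorProduct.induction_on with
  | zero => simp
  | tmul a b =>
      simp only [Algebra.TensorProduct.tmul_mul_tmul, LinearMap.mul'_apply, mul_one]
      rw [mul_right_comm]
  | add x y hx hy => rw [add_mul, map_add, hx, map_add, hy, add_mul]

theorem stmt_16 (f : B1 ≃ₐ[R0] Afr) (hf : f (Ideal.Quotient.mk I1 y1) = Xa)
    (g : B2 ≃ₐ[R0] Afr ⊗[R0] Afr)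
    (hg1 : g (Ideal.Quotient.mk I2 y1) = Xa ⊗ₜ[R0] (1 : Afr))
    (hg2 : g (Ideal.Quotient.mk I2 (MvPolynomial.C hP - y2)) = (1 : Afr) ⊗ₜ[R0] Xa) :
    I2 ≤ I1 ∧
      ∀ s : S, f (Ideal.Quotient.mk I1 s) =
        LinearMap.mul' R0 Afr (g (Ideal.Quotient.mk I2 s)) := by
  have hmem1 : y1 + y2 - MvPolynomial.C hP ∈ I1 := Ideal.subset_span (by simp)
  have hmem2 : y1 * y2 + MvPolynomial.C aP ∈ I1 := Ideal.subset_span (by simp)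
  have hI : I2 ≤ I1 := by
    rw [I2, Ideal.span_le]
    intro z hz
    simp only [Set.mem_insert_iff, Set.mem_singleton_iff] at hz
    rcases hz with rfl | rfl
    · have h1 : y1 ^ 2 - MvPolynomial.C hP * y1 - MvPolynomial.C aP
          = y1 * (y1 + y2 - MvPolynomial.C hP) - (y1 * y2 + MvPolynomial.C aP) := by ring
      rw [h1]
      exact Ideal.sub_mem _ (Ideal.mul_mem_left _ _ hmem1) hmem2
    · have h2 : y2 ^ 2 - MvPolynomial.C hP * y2 - MvPolynomial.C aP
          = y2 * (y1 + y2 - MvPolynomial.C hP) - (y1 * y2 + MvPolynomial.C aP) := by ring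
      rw [h2]
      exact Ideal.sub_mem _ (Ideal.mul_mem_left _ _ hmem1) hmem2
  refine ⟨hI, ?_⟩
  have hC1 : ∀ r : R0, Ideal.Quotient.mk I1 (MvPolynomial.C r) = algebraMap R0 B1 r :=
    fun r => rfl
  have hC2 : ∀ r : R0, Ideal.Quotient.mk I2 (MvPolynomial.C r) = algebraMap R0 B2 r :=
    fun r => rfl
  have hfy2 : f (Ideal.Quotient.mk I1 y2) = algebraMap R0 Afr hP - Xa := by
    have hy2 : Ideal.Quotient.mk I1 y2 = Ideal.Quotient.mk I1 (MvPolynomial.C hP - y1) := by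
      rw [Ideal.Quotient.eq]
      have : y2 - (MvPolynomial.C hP - y1) = y1 + y2 - MvPolynomial.C hP := by ring
      rw [this]; exact hmem1
    rw [hy2, RingHom.map_sub (Ideal.Quotient.mk I1) (MvPolynomial.C hP) y1,
      map_sub, hC1, AlgEquiv.commutes, hf]
  have hgy2 : g (Ideal.Quotient.mk I2 y2)
      = (algebraMap R0 Afr hP) ⊗ₜ[R0] (1 : Afr) - (1 : Afr) ⊗ₜ[R0] Xa := by
    have : Ideal.Quotient.mk I2 y2
        = Ideal.Quotient.mk I2 (MvPolynomial.C hP)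
          - Ideal.Quotient.mk I2 (MvPolynomial.C hP - y2) := by
      rw [← RingHom.map_sub (Ideal.Quotient.mk I2) (MvPolynomial.C hP) (MvPolynomial.C hP - y2)]
      congr 1; ring
    rw [this, map_sub, hg2, hC2, AlgEquiv.commutes, Algebra.TensorProduct.algebraMap_apply]
  intro s
  induction s using MvPolynomial.induction_on with
  | C r =>
      rw [hC1, hC2, AlgEquiv.commutes, AlgEquiv.commutes,
        Algebra.TensorProduct.algebraMap_apply, LinearMap.mul'_apply, mul_one]
  | add p q hp hq =>
      rw [RingHom.map_add, RingHom.map_add, map_add, map_add, map_add, hp, hq]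
  | mul_X p i hp =>
      fin_cases i
      · show f (Ideal.Quotient.mk I1 (p * y1))
            = LinearMap.mul' R0 Afr (g (Ideal.Quotient.mk I2 (p * y1)))
        rw [RingHom.map_mul, RingHom.map_mul, map_mul, map_mul, hf, hg1, mul'_left, hp]
      · show f (Ideal.Quotient.mk I1 (p * y2))
            = LinearMap.mul' R0 Afr (g (Ideal.Quotient.mk I2 (p * y2)))
        rw [RingHom.map_mul, RingHom.map_mul, map_mul, map_mul, hfy2, hgy2, mul_sub, mul_sub,
          map_sub, mul'_left, mul'_right, hp]


end
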